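/- Let F_q be a finite field with q ≡ 1 (mod 3) and let v ∈ F_q^* be a non-cube. Then the set J_{GH,v} of j-invariants of generalized Hessian curves E_{GH,u,v}: X^3+Y^3+v = uXY (u ∈ F_q, u^3 ≠ 27v) has cardinality (q+2)/3. Specifically, the map u ↦ F(u) = u(u^3+216v)/(u^3-27v) is a bijection from {u : u^3 ≠ 27v} to F_q, and j(E_{GH,u,v}) = F(u)^3/v, with x ↦ x^3/v being 3:1 on F_q^*. -/

import Mathlib

/-- For `q ≡ 1 (mod 3)` and `v` a non-cube in `F_q^*`, the set of `j`-invariants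
`(1/v)(u(u³+216v)/(u³-27v))³` of generalized Hessian curves `X³+Y³+v = uXY` has `(q+2)/3`
elements; the map `u ↦ u(u³+216v)/(u³-27v)` is a bijection from `{u : u³ ≠ 27v}` onto `F_q`,
and `x ↦ x³/v` is `3:1` on `F_q^*`. -/
theorem generalized_hessian_j_count_noncube
    (F : Type*) [Field F] [Fintype F] (hq : Fintype.card F % 3 = 1)
    (v : F) (hv0 : v ≠ 0) (hv : ¬ ∃ w : F, w ^ 3 = v) :
    {j : F | ∃ u : F, u ^ 3 ≠ 27 * v ∧
        j = (1 / v) * (u * (u ^ 3 + 216 * v) / (u ^ 3 - 27 * v)) ^ 3}.ncard =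
      (Fintype.card F + 2) / 3 ∧
    Set.BijOn (fun u : F => u * (u ^ 3 + 216 * v) / (u ^ 3 - 27 * v))
      {u : F | u ^ 3 ≠ 27 * v} Set.univ ∧
    ∀ x : F, x ≠ 0 →
      {y : F | y ≠ 0 ∧ y ^ 3 / v = x ^ 3 / v}.ncard = 3 := by
  classical
  -- a primitive cube root of unity
  haveI : Fact (Nat.Prime 3) := ⟨by norm_num⟩
  have hcardpos : 0 < Fintype.card F := Fintype.card_pos
  have h3div : 3 ∣ Fintype.card Fˣ := by
    rw [Fintype.card_units]; omega
  obtain ⟨ζ, hζ⟩ := exists_prime_orderOf_dvd_card (G := Fˣ) 3 h3div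
  set ω : F := ((ζ : Fˣ) : F) with hωdef
  have hω3 : ω ^ 3 = 1 := by
    have h := pow_orderOf_eq_one ζ
    rw [hζ] at h
    have h2 := congrArg Units.val h
    simpa using h2
  have hω1 : ω ≠ 1 := by
    intro h
    have : ζ = 1 := Units.ext h
    rw [this, orderOf_one] at hζ; norm_num at hζ
  have hω0 : ω ≠ 0 := by
    intro h; rw [h] at hω3; simp at hω3
  have hω21 : ω ^ 2 ≠ 1 := by
    intro h
    apply hω1
    calc ω = ω * ω ^ 2 := by rw [h, mul_one]
    _ = ω ^ 3 := by ring
    _ = 1 := hω3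
  have hsum : ω ^ 2 + ω + 1 = 0 := by
    have h : (ω - 1) * (ω ^ 2 + ω + 1) = 0 := by linear_combination hω3
    rcases mul_eq_zero.mp h with h | h
    · exact absurd (by linear_combination h) hω1
    · exact h
  have h3ne : (3 : F) ≠ 0 := by
    intro h3
    apply hω1
    have : (ω - 1) ^ 3 = 0 := by linear_combination hω3 + (- ω^2 + ω) * h3
    have := pow_eq_zero_iff (n := 3) (by norm_num) |>.mp this
    linear_combination this
  -- no u has u^3 = 27 v
  have hcube : ∀ u : F, u ^ 3 ≠ 27 * v := by
    intro u h
    exact hv ⟨u / 3, by field_simp; linear_combination h⟩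
  -- roots of z^3 = 1
  have hroots : ∀ z : F, z ^ 3 = 1 → z = 1 ∨ z = ω ∨ z = ω ^ 2 := by
    intro z hz
    have h : (z - 1) * ((z - ω) * (z - ω ^ 2)) = 0 := by
      linear_combination hz + (z - 1) * hω3 + (z - z ^ 2) * hsum
    rcases mul_eq_zero.mp h with h | h
    · exact Or.inl (by linear_combination h)
    rcases mul_eq_zero.mp h with h | h
    · exact Or.inr (Or.inl (by linear_combination h))
    · exact Or.inr (Or.inr (by linear_combination h))
  -- fibers of cubing over nonzero values
  have hfiber : ∀ x : F, x ≠ 0 → {y : F | y ^ 3 = x ^ 3} = {x, ω * x, ω ^ 2 * x} := by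
    intro x hx
    ext y
    simp only [Set.mem_setOf_eq, Set.mem_insert_iff, Set.mem_singleton_iff]
    constructor
    · intro h
      have hz : (y / x) ^ 3 = 1 := by field_simp; linear_combination h
      rcases hroots _ hz with h' | h' | h'
      · left; field_simp at h'; exact h'
      · right; left; field_simp at h'; linear_combination h'
      · right; right; field_simp at h'; linear_combination h'
    · rintro (rfl | rfl | rfl)
      · rfl
      · ring_nf; linear_combination x ^ 3 * hω3
      · ring_nf; linear_combination x ^ 3 * (ω ^ 3 + 1) * hω3
  have hd1 : ∀ x : F, x ≠ 0 → x ≠ ω * x := by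
    intro x hx h
    have h' : (ω - 1) * x = 0 := by linear_combination -h
    rcases mul_eq_zero.mp h' with h' | h'
    · exact hω1 (by linear_combination h')
    · exact hx h'
  have hd2 : ∀ x : F, x ≠ 0 → x ≠ ω ^ 2 * x := by
    intro x hx h
    have h' : (ω ^ 2 - 1) * x = 0 := by linear_combination -h
    rcases mul_eq_zero.mp h' with h' | h'
    · exact hω21 (by linear_combination h')
    · exact hx h'
  have hd3 : ∀ x : F, x ≠ 0 → ω * x ≠ ω ^ 2 * x := by
    intro x hx h
    apply hω1
    have h' : ω * (x * (ω - 1)) = 0 := by linear_combination -h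
    rcases mul_eq_zero.mp h' with h' | h'
    · exact absurd h' hω0
    rcases mul_eq_zero.mp h' with h' | h'
    · exact absurd h' hx
    · linear_combination h'
  -- injectivity of the map
  have hinj : Function.Injective (fun u : F => u * (u ^ 3 + 216 * v) / (u ^ 3 - 27 * v)) := by
    intro a b heq
    simp only at heq
    have ha : a ^ 3 - 27 * v ≠ 0 := sub_ne_zero.mpr (hcube a)
    have hb : b ^ 3 - 27 * v ≠ 0 := sub_ne_zero.mpr (hcube b)
    by_contra hab
    have hab' : a - b ≠ 0 := sub_ne_zero.mpr hab
    rw [div_eq_div_iff ha hb] at heq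
    have hB : (a * b) ^ 3 - 27 * v * ((a + b) ^ 3 + 6 * (a + b) * (a * b)) - 5832 * v ^ 2 = 0 := by
      apply mul_left_cancel₀ hab'
      rw [mul_zero]
      linear_combination heq
    have key : (108 * v + (a + b) * (a * b)) ^ 3 = 27 * v * ((a + b) ^ 2 + 2 * (a * b)) ^ 3 := by
      linear_combination ((a + b) ^ 3 - 216 * v) * hB
    by_cases hsp : (a + b) ^ 2 + 2 * (a * b) = 0
    · have h108 : 108 * v + (a + b) * (a * b) = 0 := by
        have h0 : (108 * v + (a + b) * (a * b)) ^ 3 = 0 := by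
          rw [key, hsp]; ring
        exact pow_eq_zero_iff (n := 3) (by norm_num) |>.mp h0
      by_cases h2 : (2 : F) = 0
      · have hs : (a + b) ^ 2 = 0 := by linear_combination hsp - (a * b) * h2
        have hs0 : a + b = 0 := pow_eq_zero_iff (n := 2) (by norm_num) |>.mp hs
        exact hab (by linear_combination hs0 - b * h2)
      · have h6 : (6 : F) ≠ 0 := by
          intro h
          have : (2 : F) * 3 = 0 := by linear_combination h
          rcases mul_eq_zero.mp this with h' | h'
          · exact h2 h'
          · exact h3ne h'
        refine hv ⟨(a + b) / 6, ?_⟩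
        field_simp
        linear_combination (a + b) * hsp - 2 * h108
    · refine hv ⟨(108 * v + (a + b) * (a * b)) / (3 * ((a + b) ^ 2 + 2 * (a * b))), ?_⟩
      rw [div_pow, div_eq_iff (pow_ne_zero _ (mul_ne_zero h3ne hsp))]
      linear_combination key
  have hbij : Function.Bijective (fun u : F => u * (u ^ 3 + 216 * v) / (u ^ 3 - 27 * v)) :=
    Finite.injective_iff_bijective.mp hinj
  -- the Finset of cubes
  set k : Finset F := Finset.univ.image (fun z : F => z ^ 3) with hk
  have h0k : (0 : F) ∈ k := by
    rw [hk]
    exact Finset.mem_image.mpr ⟨0, Finset.mem_univ 0, by ring⟩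
  have hkcard : Fintype.card F = 3 * k.card - 2 ∧ 1 ≤ k.card := by
    constructor
    · have hsum' : Fintype.card F = ∑ b ∈ k, (Finset.univ.filter (fun y : F => y ^ 3 = b)).card := by
        rw [← Finset.card_univ]
        exact Finset.card_eq_sum_card_fiberwise
          (fun x _ => Finset.mem_image.mpr ⟨x, Finset.mem_univ x, rfl⟩)
      have hfib0 : (Finset.univ.filter (fun y : F => y ^ 3 = (0:F))).card = 1 := by
        have : (Finset.univ.filter (fun y : F => y ^ 3 = (0:F))) = {0} := by
          ext y; simp [pow_eq_zero_iff]
        rw [this]; simp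
      have hfibne : ∀ b ∈ k, b ≠ 0 → (Finset.univ.filter (fun y : F => y ^ 3 = b)).card = 3 := by
        intro b hbk hb0
        obtain ⟨x, _, hx3⟩ := Finset.mem_image.mp hbk
        have hx0 : x ≠ 0 := by rintro rfl; exact hb0 (by rw [← hx3]; ring)
        have hset : (Finset.univ.filter (fun y : F => y ^ 3 = b)) = {x, ω * x, ω ^ 2 * x} := by
          ext y
          simp only [Finset.mem_filter, Finset.mem_univ, true_and, Finset.mem_insert,
            Finset.mem_singleton]
          constructor
          · intro h
            have := hfiber x hx0
            have hy : y ∈ ({x, ω * x, ω ^ 2 * x} : Set F) := by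
              rw [← this]; simp only [Set.mem_setOf_eq]; rw [h, hx3]
            simpa using hy
          · intro h
            have hy : y ∈ ({x, ω * x, ω ^ 2 * x} : Set F) := by simpa using h
            rw [← hfiber x hx0] at hy
            simp only [Set.mem_setOf_eq] at hy
            rw [hy, hx3]
        rw [hset]
        rw [Finset.card_insert_of_notMem (by simp [hd1 x hx0, hd2 x hx0]),
          Finset.card_insert_of_notMem (by simp [hd3 x hx0])]
        simp
      rw [hsum', ← Finset.sum_erase_add k _ h0k, hfib0]
      have : ∀ b ∈ k.erase 0, (Finset.univ.filter (fun y : F => y ^ 3 = b)).card = 3 := by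
        intro b hb
        exact hfibne b (Finset.mem_of_mem_erase hb) (Finset.ne_of_mem_erase hb)
      rw [Finset.sum_congr rfl this, Finset.sum_const, Finset.card_erase_of_mem h0k]
      have hk1 : 1 ≤ k.card := Finset.card_pos.mpr ⟨0, h0k⟩
      simp only [smul_eq_mul]
      omega
    · exact Finset.card_pos.mpr ⟨0, h0k⟩
  refine ⟨?_, ?_, ?_⟩
  · -- count of j-invariants
    have hSeq : {j : F | ∃ u : F, u ^ 3 ≠ 27 * v ∧
        j = (1 / v) * (u * (u ^ 3 + 216 * v) / (u ^ 3 - 27 * v)) ^ 3}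
        = ↑(Finset.univ.image (fun z : F => (1 / v) * z ^ 3)) := by
      ext j
      simp only [Set.mem_setOf_eq, Finset.coe_image, Finset.coe_univ, Set.image_univ,
        Set.mem_range]
      constructor
      · rintro ⟨u, -, rfl⟩
        exact ⟨u * (u ^ 3 + 216 * v) / (u ^ 3 - 27 * v), rfl⟩
      · rintro ⟨z, rfl⟩
        obtain ⟨u, hu⟩ := hbij.2 z
        exact ⟨u, hcube u, by
          rw [show u * (u ^ 3 + 216 * v) / (u ^ 3 - 27 * v) = z from hu]⟩
    rw [hSeq, Set.ncard_coe_finset]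
    have himg : Finset.univ.image (fun z : F => (1 / v) * z ^ 3)
        = k.image (fun t : F => (1 / v) * t) := by
      rw [hk, Finset.image_image]
      rfl
    rw [himg, Finset.card_image_of_injective _ (mul_right_injective₀ (one_div_ne_zero hv0))]
    omega
  · -- bijectivity on the domain
    have hdom : {u : F | u ^ 3 ≠ 27 * v} = Set.univ := by
      ext u; simp [hcube u]
    rw [hdom]
    exact Set.bijOn_univ.mpr hbij
  · -- fibers of x ↦ x^3 / v
    intro x hx
    have hset : {y : F | y ≠ 0 ∧ y ^ 3 / v = x ^ 3 / v} = {x, ω * x, ω ^ 2 * x} := by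
      ext y
      simp only [Set.mem_setOf_eq, Set.mem_insert_iff, Set.mem_singleton_iff]
      constructor
      · rintro ⟨hy0, hy⟩
        have h3 : y ^ 3 = x ^ 3 := by
          field_simp at hy; exact hy
        have := hfiber x hx
        have hy' : y ∈ ({x, ω * x, ω ^ 2 * x} : Set F) := by
          rw [← this]; exact h3
        simpa using hy'
      · intro h
        have hy' : y ∈ ({x, ω * x, ω ^ 2 * x} : Set F) := by simpa using h
        rw [← hfiber x hx] at hy'
        simp only [Set.mem_setOf_eq] at hy'
        constructor
        · intro h0
          rw [h0] at hy'
          exact hx (pow_eq_zero_iff (n := 3) (by norm_num) |>.mp (by rw [← hy']; ring))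
        · rw [hy']
    rw [hset]
    exact Set.ncard_eq_three.mpr ⟨x, ω * x, ω ^ 2 * x, hd1 x hx, hd2 x hx, hd3 x hx, rfl⟩
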